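/- For every integer n ≥ 2, ∑_{i=1}^{n−1} (−1)^{i+1}·binom(n+1, i+1)·H_i equals 2·H_n if n is even, and equals 0 if n is odd. -/

import Mathlib

open Finset

lemma altshift (m : ℕ) :
    ∑ j ∈ range (m + 1), (-1 : ℚ) ^ j * ((m + 1).choose (j + 1) : ℚ) = 1 := by
  have h : ∑ i ∈ range (m + 2), (-1 : ℚ) ^ i * ((m + 1).choose i : ℚ) = 0 := by
    have h := Int.alternating_sum_range_choose_of_ne (n := m + 1) (Nat.succ_ne_zero m)
    exact_mod_cast congrArg (Int.cast : ℤ → ℚ) h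
  rw [Finset.sum_range_succ' (fun i => (-1 : ℚ) ^ i * ((m + 1).choose i : ℚ)) (m + 1)] at h
  simp only [pow_succ, pow_zero, one_mul, Nat.choose_zero_right, Nat.cast_one] at h
  have : ∑ j ∈ range (m + 1), (-1 : ℚ) ^ j * ((m + 1).choose (j + 1) : ℚ)
      = -∑ j ∈ range (m + 1), (-1 : ℚ) ^ j * (-1) * ((m + 1).choose (j + 1) : ℚ) := by
    rw [← Finset.sum_neg_distrib]
    exact Finset.sum_congr rfl (fun j _ => by ring)
  rw [this]
  linarith

lemma aux1 (m : ℕ) :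
    ∑ j ∈ range (m + 1), (-1 : ℚ) ^ j * (m.choose j : ℚ) / (j + 1) = 1 / (m + 1) := by
  have key : ∀ j : ℕ, (m.choose j : ℚ) / (j + 1) = ((m + 1).choose (j + 1) : ℚ) / (m + 1) := by
    intro j
    have h := Nat.add_one_mul_choose_eq m j
    have h' : ((m : ℚ) + 1) * (m.choose j : ℚ) = ((m + 1).choose (j + 1) : ℚ) * ((j : ℚ) + 1) := by
      exact_mod_cast congrArg (Nat.cast : ℕ → ℚ) h
    have hm : (m : ℚ) + 1 ≠ 0 := by positivity
    have hj : (j : ℚ) + 1 ≠ 0 := by positivity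
    field_simp
    linarith [h']
  calc ∑ j ∈ range (m + 1), (-1 : ℚ) ^ j * (m.choose j : ℚ) / (j + 1)
      = ∑ j ∈ range (m + 1), (-1 : ℚ) ^ j * ((m + 1).choose (j + 1) : ℚ) * (1 / (m + 1)) := by
        refine Finset.sum_congr rfl (fun j _ => ?_)
        rw [mul_div_assoc, key j]; ring
    _ = 1 / (m + 1) := by rw [← Finset.sum_mul, altshift]; ring

open Finset

lemma lemA (m : ℕ) :
    ∑ j ∈ range (m + 1), (-1 : ℚ) ^ j * (m.choose j : ℚ) / j = -harmonic m := by
  induction m with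
  | zero => simp
  | succ m ih =>
    rw [Finset.sum_range_succ' (fun j => (-1 : ℚ) ^ j * ((m + 1).choose j : ℚ) / j) (m + 1)]
    push_cast
    have step : ∀ j ∈ range (m + 1),
        (-1 : ℚ) ^ (j + 1) * ((m + 1).choose (j + 1) : ℚ) / (j + 1)
          = -((-1 : ℚ) ^ j * (m.choose (j + 1) : ℚ) / (j + 1))
            - (-1 : ℚ) ^ j * (m.choose j : ℚ) / (j + 1) := by
      intro j _
      have : ((m + 1).choose (j + 1) : ℚ) = (m.choose j : ℚ) + (m.choose (j + 1) : ℚ) := by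
        exact_mod_cast congrArg (Nat.cast : ℕ → ℚ) (Nat.choose_succ_succ m j)
      rw [this, pow_succ]; ring
    rw [Finset.sum_congr rfl step, Finset.sum_sub_distrib, Finset.sum_neg_distrib, aux1]
    -- relate ∑ j ∈ range (m+1), (-1)^j * C(m,j+1)/(j+1) to ih
    have hA : ∑ j ∈ range (m + 1), (-1 : ℚ) ^ j * (m.choose (j + 1) : ℚ) / (j + 1)
        = harmonic m := by
      rw [Finset.sum_range_succ]
      rw [Nat.choose_succ_self]
      rw [Finset.sum_range_succ' (fun j => (-1 : ℚ) ^ j * (m.choose j : ℚ) / j) m] at ih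
      simp only [pow_succ] at ih ⊢
      have : ∑ j ∈ range m, (-1 : ℚ) ^ j * (m.choose (j + 1) : ℚ) / (j + 1)
          = -∑ j ∈ range m, (-1 : ℚ) ^ j * (-1) * (m.choose (j + 1) : ℚ) / (j + 1) := by
        rw [← Finset.sum_neg_distrib]
        exact Finset.sum_congr rfl (fun j _ => by push_cast; ring)
      rw [this]
      simp only [Nat.cast_zero, div_zero, add_zero, Nat.cast_ofNat] at ih
      simp only [Nat.cast_zero, mul_zero, zero_div, zero_mul, add_zero]
      push_cast at ih ⊢
      linarith
    rw [hA, harmonic_succ]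
    push_cast
    ring

lemma lemB (m : ℕ) :
    ∑ j ∈ range (m + 1), (-1 : ℚ) ^ j * (m.choose j : ℚ) * harmonic j = -(1 / (m : ℚ)) := by
  induction m with
  | zero => simp
  | succ m ih =>
    rw [Finset.sum_range_succ' (fun j => (-1 : ℚ) ^ j * ((m + 1).choose j : ℚ) * harmonic j) (m + 1)]
    push_cast
    have step : ∀ j ∈ range (m + 1),
        (-1 : ℚ) ^ (j + 1) * ((m + 1).choose (j + 1) : ℚ) * harmonic (j + 1)
          = -((-1 : ℚ) ^ j * (m.choose (j + 1) : ℚ) * harmonic (j + 1))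
            - (-1 : ℚ) ^ j * (m.choose j : ℚ) * harmonic j
            - (-1 : ℚ) ^ j * (m.choose j : ℚ) / (j + 1) := by
      intro j _
      have h1 : ((m + 1).choose (j + 1) : ℚ) = (m.choose j : ℚ) + (m.choose (j + 1) : ℚ) := by
        exact_mod_cast congrArg (Nat.cast : ℕ → ℚ) (Nat.choose_succ_succ m j)
      rw [h1, harmonic_succ, pow_succ]
      push_cast
      field_simp
      ring
    rw [Finset.sum_congr rfl step, Finset.sum_sub_distrib, Finset.sum_sub_distrib,
      Finset.sum_neg_distrib, aux1, ih]
    have hA : ∑ j ∈ range (m + 1), (-1 : ℚ) ^ j * (m.choose (j + 1) : ℚ) * harmonic (j + 1)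
        = 1 / (m : ℚ) := by
      have ih' := ih
      rw [Finset.sum_range_succ' (fun j => (-1 : ℚ) ^ j * (m.choose j : ℚ) * harmonic j) m] at ih'
      rw [Finset.sum_range_succ, Nat.choose_succ_self]
      simp only [pow_succ] at ih' ⊢
      have : ∑ j ∈ range m, (-1 : ℚ) ^ j * (m.choose (j + 1) : ℚ) * harmonic (j + 1)
          = -∑ j ∈ range m, (-1 : ℚ) ^ j * (-1) * (m.choose (j + 1) : ℚ) * harmonic (j + 1) := by
        rw [← Finset.sum_neg_distrib]
        exact Finset.sum_congr rfl (fun j _ => by ring)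
      rw [this]
      simp only [harmonic_zero, mul_zero, add_zero, Nat.cast_zero] at ih'
      simp only [Nat.cast_zero, mul_zero, zero_div, zero_mul, add_zero]
      push_cast at ih' ⊢
      linarith
    rw [hA]
    simp only [harmonic_zero, mul_zero, add_zero]
    push_cast
    ring
lemma unpack (f : ℕ → ℚ) (m : ℕ) :
    ∑ j ∈ range (m + 3 + 1), f j
      = ∑ k ∈ range (m + 1), f (k + 2) + f (m + 3) + f 1 + f 0 := by
  rw [Finset.sum_range_succ, Finset.sum_range_succ' f (m + 2),
    Finset.sum_range_succ' (fun k => f (k + 1)) (m + 1)]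
  ring

theorem alternating_binomial_sum_harmonic_parity (n : ℕ) (hn : 2 ≤ n) :
    ∑ i ∈ Finset.Icc 1 (n - 1),
        (-1 : ℚ) ^ (i + 1) * (Nat.choose (n + 1) (i + 1) : ℚ) * harmonic i =
      if Even n then 2 * harmonic n else 0 := by
  obtain ⟨m, rfl⟩ : ∃ m, n = m + 2 := ⟨n - 2, by omega⟩
  rw [show m + 2 - 1 = m + 1 by omega, show m + 2 + 1 = m + 3 by omega]
  rw [← Finset.Ico_add_one_right_eq_Icc, Finset.sum_Ico_eq_sum_range]
  rw [show m + 1 + 1 - 1 = m + 1 by omega]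
  have key : ∀ k ∈ range (m + 1),
      (-1 : ℚ) ^ (1 + k + 1) * ((m + 3).choose (1 + k + 1) : ℚ) * harmonic (1 + k)
        = ((-1 : ℚ) ^ (k + 2) * ((m + 3).choose (k + 2) : ℚ) * harmonic (k + 2)
          - (-1 : ℚ) ^ (k + 2) * ((m + 3).choose (k + 2) : ℚ) / (k + 2)) := by
    intro k _
    rw [show 1 + k + 1 = k + 2 by omega, show 1 + k = k + 1 by omega]
    have hs := harmonic_succ (k + 1)
    have hh : harmonic (k + 1) = harmonic (k + 2) - ((k : ℚ) + 2)⁻¹ := by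
      rw [show k + 2 = (k + 1) + 1 by omega, hs]
      push_cast; ring
    rw [hh]; push_cast; ring
  rw [Finset.sum_congr rfl key, Finset.sum_sub_distrib]
  have hB := lemB (m + 3)
  have hA := lemA (m + 3)
  rw [unpack (fun j => (-1 : ℚ) ^ j * ((m + 3).choose j : ℚ) * harmonic j) m] at hB
  rw [unpack (fun j => (-1 : ℚ) ^ j * ((m + 3).choose j : ℚ) / j) m] at hA
  simp only [Nat.choose_self, Nat.choose_zero_right, Nat.choose_one_right, harmonic_zero,
    pow_one, pow_zero, Nat.cast_one, Nat.cast_zero, mul_zero, zero_mul, add_zero, mul_one,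
    one_mul, div_zero, div_one, Nat.cast_ofNat] at hB hA
  have hH : harmonic (m + 3) = harmonic (m + 2) + ((m : ℚ) + 3)⁻¹ := by
    rw [show m + 3 = (m + 2) + 1 by omega, harmonic_succ]
    push_cast; ring
  have h1 : harmonic 1 = 1 := by simp [harmonic]
  rw [h1] at hB
  have hone : (1 : ℚ) / ((m : ℚ) + 3) = ((m : ℚ) + 3)⁻¹ := one_div _
  by_cases hev : Even (m + 2)
  · rw [if_pos hev]
    have hodd : Odd (m + 3) := by
      rcases hev with ⟨t, ht⟩; exact ⟨t, by omega⟩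
    rw [hodd.neg_one_pow] at hB hA
    simp only [one_div, neg_div, div_eq_mul_inv] at hB hA ⊢
    push_cast at hB hA hH ⊢
    linarith
  · rw [if_neg hev]
    have heven : Even (m + 3) := by
      rcases Nat.even_or_odd (m + 3) with h | h
      · exact h
      · exfalso; apply hev; rcases h with ⟨t, ht⟩; exact ⟨t, by omega⟩
    rw [heven.neg_one_pow] at hB hA
    simp only [one_div, neg_div, div_eq_mul_inv] at hB hA ⊢
    push_cast at hB hA hH ⊢
    linarith
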